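/- Let d ≥ 1, let A ⊆ ℝ^d be an arbitrary set, let r > 0 and c ∈ [0,1]. Then the Lebesgue volume of the r-thickening of the dilated set is at most the Lebesgue volume of the r-thickening of the set itself: |B_r(c·A)| ≤ |B_r(A)|. -/

import Mathlib

open Pointwise

open MeasureTheory

open Metric

open scoped NNReal ENNReal

/-- The open `r`-thickening of a set `A ⊆ ℝ^d`. -/
def thick {d : ℕ} (r : ℝ) (A : Set (EuclideanSpace ℝ (Fin d))) :
    Set (EuclideanSpace ℝ (Fin d)) :=
  {x | ∃ a ∈ A, dist x a < r}

lemma hausdorff_eq_smul_volume (d : ℕ) :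
    ∃ c : ℝ≥0, c ≠ 0 ∧
      (μH[(d:ℝ)] : Measure (EuclideanSpace ℝ (Fin d))) = c • volume := by
  have hd0 : (0:ℝ) ≤ (d:ℝ) := Nat.cast_nonneg d
  set e : EuclideanSpace ℝ (Fin d) ≃ (Fin d → ℝ) := WithLp.equiv 2 (Fin d → ℝ) with he
  have hlip : LipschitzWith 1 e := PiLp.lipschitzWith_ofLp 2 _
  have hanti := PiLp.antilipschitzWith_ofLp 2 (fun _ : Fin d => ℝ)
  have hlips : LipschitzWith _ e.symm := hanti.to_rightInverse e.right_inv
  have hpi : (μH[(d:ℝ)] : Measure (Fin d → ℝ)) = volume := by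
    simpa using (hausdorffMeasure_pi_real (ι := Fin d))
  haveI : IsFiniteMeasureOnCompacts (μH[(d:ℝ)] : Measure (EuclideanSpace ℝ (Fin d))) := by
    constructor
    intro K hK
    have h1 : K = e.symm '' (e '' K) := (Equiv.symm_image_image e K).symm
    have h2 := hlips.hausdorffMeasure_image_le hd0 (e '' K)
    rw [hpi] at h2
    have h3 : volume (e '' K) < ⊤ := (hK.image hlip.continuous).measure_lt_top
    calc μH[(d:ℝ)] K = μH[(d:ℝ)] (e.symm '' (e '' K)) := by rw [← h1]
      _ ≤ _ := h2
      _ < ⊤ := ENNReal.mul_lt_top (ENNReal.rpow_lt_top_of_nonneg hd0 ENNReal.coe_ne_top) h3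
  have heq := Measure.isAddLeftInvariant_eq_smul
    (μH[(d:ℝ)] : Measure (EuclideanSpace ℝ (Fin d))) volume
  refine ⟨_, ?_, heq⟩
  -- positivity of the scalar factor
  have hopen : IsOpen (e '' ball (0 : EuclideanSpace ℝ (Fin d)) 1) := by
    rw [Equiv.image_eq_preimage_symm]
    exact isOpen_ball.preimage hlips.continuous
  have hne : (e '' ball (0 : EuclideanSpace ℝ (Fin d)) 1).Nonempty :=
    (Metric.nonempty_ball.2 one_pos).image e
  have hpos : (0:ℝ≥0∞) < volume (e '' ball (0 : EuclideanSpace ℝ (Fin d)) 1) :=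
    hopen.measure_pos volume hne
  have h4 := hlip.hausdorffMeasure_image_le hd0 (ball (0 : EuclideanSpace ℝ (Fin d)) 1)
  rw [hpi] at h4
  simp only [ENNReal.coe_one, ENNReal.one_rpow, one_mul] at h4
  have hball : (0:ℝ≥0∞) < μH[(d:ℝ)] (ball (0 : EuclideanSpace ℝ (Fin d)) 1) :=
    lt_of_lt_of_le hpos h4
  rw [heq] at hball
  intro hc
  rw [hc] at hball
  simp at hball

lemma kneser_dilation (d : ℕ) (S : Set (EuclideanSpace ℝ (Fin d))) (hcl : IsClosed S)
    (hne : S.Nonempty) {r l : ℝ} (hl : 1 ≤ l) :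
    volume {x : EuclideanSpace ℝ (Fin d) | infDist x S < l * r}
      ≤ ENNReal.ofReal (l ^ d) * volume {x : EuclideanSpace ℝ (Fin d) | infDist x S < r} := by
  obtain ⟨c, hc0, hceq⟩ := hausdorff_eq_smul_volume d
  have hl0 : (0:ℝ) < l := lt_of_lt_of_le one_pos hl
  have hμ0 : (0:ℝ) < l⁻¹ := inv_pos.2 hl0
  have hμ1 : l⁻¹ ≤ 1 := inv_le_one_of_one_le₀ hl
  choose n hnS hndist using fun x : EuclideanSpace ℝ (Fin d) =>
    hcl.exists_infDist_eq_dist hne x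
  set Φ : EuclideanSpace ℝ (Fin d) → EuclideanSpace ℝ (Fin d) :=
    fun x => n x + l⁻¹ • (x - n x) with hΦ
  have key : ∀ x y, dist x y ≤ l * dist (Φ x) (Φ y) := by
    intro x y
    set a := n x with ha
    set b := n y with hb
    have hxa : dist x a ≤ dist x b := (hndist x) ▸ infDist_le_dist_of_mem (hnS y)
    have hyb : dist y b ≤ dist y a := (hndist y) ▸ infDist_le_dist_of_mem (hnS x)
    have h1 : ‖x‖^2 - 2*(inner ℝ x a : ℝ) + ‖a‖^2 ≤ ‖x‖^2 - 2*(inner ℝ x b : ℝ) + ‖b‖^2 := by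
      rw [← norm_sub_sq_real, ← norm_sub_sq_real]
      rw [dist_eq_norm, dist_eq_norm] at hxa
      exact pow_le_pow_left₀ (norm_nonneg _) hxa 2
    have h2 : ‖y‖^2 - 2*(inner ℝ y b : ℝ) + ‖b‖^2 ≤ ‖y‖^2 - 2*(inner ℝ y a : ℝ) + ‖a‖^2 := by
      rw [← norm_sub_sq_real, ← norm_sub_sq_real]
      rw [dist_eq_norm, dist_eq_norm] at hyb
      exact pow_le_pow_left₀ (norm_nonneg _) hyb 2
    have hexp : (inner ℝ (a - b) (x - y) : ℝ)
        = (inner ℝ x a : ℝ) - (inner ℝ y a : ℝ) - ((inner ℝ x b : ℝ) - (inner ℝ y b : ℝ)) := by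
      rw [inner_sub_left, inner_sub_right, inner_sub_right,
        real_inner_comm a x, real_inner_comm a y, real_inner_comm b x, real_inner_comm b y]
      try ring
    have hinner : (0:ℝ) ≤ (inner ℝ (a - b) (x - y) : ℝ) := by rw [hexp]; linarith
    set v := (1 - l⁻¹) • (a - b) with hv
    set w := l⁻¹ • (x - y) with hw
    have hvw : Φ x - Φ y = v + w := by
      simp only [hΦ, hv, hw, ← ha, ← hb]
      module
    have hivw : (0:ℝ) ≤ (inner ℝ v w : ℝ) := by
      rw [hv, hw, real_inner_smul_left, real_inner_smul_right]
      exact mul_nonneg (by linarith) (mul_nonneg hμ0.le hinner)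
    have hns := norm_add_sq_real v w
    have hnorm : ‖w‖ ≤ ‖v + w‖ := by
      nlinarith [norm_nonneg (v + w), norm_nonneg w, sq_nonneg ‖v‖]
    have hwn : ‖w‖ = l⁻¹ * ‖x - y‖ := by
      rw [hw, norm_smul, Real.norm_eq_abs, abs_of_pos hμ0]
    rw [dist_eq_norm, dist_eq_norm, hvw]
    calc ‖x - y‖ = l * (l⁻¹ * ‖x - y‖) := by field_simp
      _ = l * ‖w‖ := by rw [hwn]
      _ ≤ l * ‖v + w‖ := mul_le_mul_of_nonneg_left hnorm hl0.le
  set T := {x : EuclideanSpace ℝ (Fin d) | infDist x S < l * r} with hT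
  set R := {x : EuclideanSpace ℝ (Fin d) | infDist x S < r} with hR
  have hΦmem : ∀ x ∈ T, Φ x ∈ R := by
    intro x hx
    have hle : infDist (Φ x) S ≤ dist (Φ x) (n x) := infDist_le_dist_of_mem (hnS x)
    have hΦn : Φ x - n x = l⁻¹ • (x - n x) := by simp [hΦ]
    have hdd : dist (Φ x) (n x) = l⁻¹ * dist x (n x) := by
      rw [dist_eq_norm, dist_eq_norm, hΦn, norm_smul, Real.norm_eq_abs, abs_of_pos hμ0]
    have hx' : dist x (n x) < l * r := (hndist x) ▸ hx
    have : infDist (Φ x) S < r :=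
      calc infDist (Φ x) S ≤ l⁻¹ * dist x (n x) := hdd ▸ hle
        _ < l⁻¹ * (l * r) := mul_lt_mul_of_pos_left hx' hμ0
        _ = r := by field_simp
    exact this
  set U := Φ '' T with hU
  set K : ℝ≥0 := l.toNNReal with hK
  set Ψ := Function.invFunOn Φ T with hΨ
  have hΨlip : LipschitzOnWith K Ψ U := by
    rw [lipschitzOnWith_iff_dist_le_mul]
    rintro u ⟨x, hx, rfl⟩ v ⟨y, hy, rfl⟩
    have h1 : Φ (Ψ (Φ x)) = Φ x := Function.invFunOn_eq ⟨x, hx, rfl⟩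
    have h2 : Φ (Ψ (Φ y)) = Φ y := Function.invFunOn_eq ⟨y, hy, rfl⟩
    have hk := key (Ψ (Φ x)) (Ψ (Φ y))
    rw [h1, h2] at hk
    calc dist (Ψ (Φ x)) (Ψ (Φ y)) ≤ l * dist (Φ x) (Φ y) := hk
      _ = (K:ℝ) * dist (Φ x) (Φ y) := by rw [hK, Real.coe_toNNReal l hl0.le]
  have hTsub : T ⊆ Ψ '' U := by
    intro x hx
    refine ⟨Φ x, ⟨x, hx, rfl⟩, ?_⟩
    have h1 : Φ (Ψ (Φ x)) = Φ x := Function.invFunOn_eq ⟨x, hx, rfl⟩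
    have hk := key (Ψ (Φ x)) x
    rw [h1] at hk
    simp only [dist_self, mul_zero] at hk
    exact dist_le_zero.1 hk
  have hUsub : U ⊆ R := by rintro u ⟨x, hx, rfl⟩; exact hΦmem x hx
  have hcoe : ((K:ℝ≥0∞)) ^ ((d:ℕ):ℝ) = ENNReal.ofReal (l ^ d) := by
    rw [ENNReal.rpow_natCast, ENNReal.ofReal_pow hl0.le]
    congr 1
  have hmes : (μH[(d:ℝ)] : Measure (EuclideanSpace ℝ (Fin d))) T
      ≤ ENNReal.ofReal (l ^ d) * (μH[(d:ℝ)] : Measure (EuclideanSpace ℝ (Fin d))) R := by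
    calc (μH[(d:ℝ)] : Measure (EuclideanSpace ℝ (Fin d))) T
        ≤ μH[(d:ℝ)] (Ψ '' U) := measure_mono hTsub
      _ ≤ (K:ℝ≥0∞) ^ ((d:ℕ):ℝ) * μH[(d:ℝ)] U :=
          hΨlip.hausdorffMeasure_image_le (Nat.cast_nonneg d)
      _ ≤ (K:ℝ≥0∞) ^ ((d:ℕ):ℝ) * μH[(d:ℝ)] R := mul_le_mul_right (measure_mono hUsub) _
      _ = ENNReal.ofReal (l ^ d) * μH[(d:ℝ)] R := by rw [hcoe]
  rw [hceq] at hmes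
  simp only [Measure.smul_apply, ENNReal.smul_def, smul_eq_mul] at hmes
  rw [show ENNReal.ofReal (l ^ d) * ((c:ℝ≥0∞) * volume R)
      = (c:ℝ≥0∞) * (ENNReal.ofReal (l ^ d) * volume R) by ring] at hmes
  exact (ENNReal.mul_le_mul_iff_right (by exact_mod_cast hc0) ENNReal.coe_ne_top).1 hmes

/-- For an arbitrary set `A ⊆ ℝ^d`, `r > 0` and `c ∈ [0,1]`,
`|B_r(c·A)| ≤ |B_r(A)|`. -/
theorem volume_thickening_dilation_le (d : ℕ) (hd : 1 ≤ d)
    (A : Set (EuclideanSpace ℝ (Fin d))) (r : ℝ) (hr : 0 < r)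
    (c : ℝ) (hc₀ : 0 ≤ c) (hc₁ : c ≤ 1) :
    volume (thick r (c • A)) ≤ volume (thick r A) := by
  rcases A.eq_empty_or_nonempty with rfl | hA
  · simp [thick, Set.smul_set_empty]
  rcases hc₀.eq_or_lt with h0 | hcpos
  · -- c = 0
    have hzero : c • A = {(0 : EuclideanSpace ℝ (Fin d))} := by
      rw [← h0, Set.zero_smul_set hA]
      rfl
    have hball : thick r (c • A) = ball (0 : EuclideanSpace ℝ (Fin d)) r := by
      ext x
      simp [thick, hzero, mem_ball]
    obtain ⟨a, ha⟩ := hA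
    have hsub : ball a r ⊆ thick r A := fun x hx => ⟨a, ha, mem_ball.1 hx⟩
    calc volume (thick r (c • A)) = volume (ball (0 : EuclideanSpace ℝ (Fin d)) r) := by
          rw [hball]
      _ = volume (ball a r) := (Measure.addHaar_ball_center volume a r).symm
      _ ≤ volume (thick r A) := measure_mono hsub
  · -- 0 < c
    have hlC : 1 ≤ c⁻¹ := one_le_inv₀ hcpos |>.2 hc₁
    have hset : thick r (c • A) = c • thick (c⁻¹ * r) A := by
      ext x
      simp only [thick, Set.mem_setOf_eq, Set.mem_smul_set]
      constructor
      · rintro ⟨b, hb, hdist⟩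
        obtain ⟨a, ha, rfl⟩ := hb
        refine ⟨c⁻¹ • x, ⟨a, ha, ?_⟩, by rw [smul_smul, mul_inv_cancel₀ hcpos.ne', one_smul]⟩
        have heq : dist x (c • a) = c * dist (c⁻¹ • x) a := by
          conv_lhs => rw [show x = c • (c⁻¹ • x) by
            rw [smul_smul, mul_inv_cancel₀ hcpos.ne', one_smul]]
          rw [dist_smul₀, Real.norm_eq_abs, abs_of_pos hcpos]
        rw [heq] at hdist
        calc dist (c⁻¹ • x) a = c⁻¹ * (c * dist (c⁻¹ • x) a) := by field_simp
          _ < c⁻¹ * r := mul_lt_mul_of_pos_left hdist (inv_pos.2 hcpos)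
      · rintro ⟨y, ⟨a, ha, hya⟩, rfl⟩
        refine ⟨c • a, ⟨a, ha, rfl⟩, ?_⟩
        have heq : dist (c • y) (c • a) = c * dist y a := by
          rw [dist_smul₀, Real.norm_eq_abs, abs_of_pos hcpos]
        rw [heq]
        calc c * dist y a < c * (c⁻¹ * r) := mul_lt_mul_of_pos_left hya hcpos
          _ = r := by field_simp
    have hthick : ∀ s : ℝ, thick s A
        = {x : EuclideanSpace ℝ (Fin d) | infDist x (closure A) < s} := by
      intro s
      ext x
      simp only [thick, Set.mem_setOf_eq]
      rw [Metric.infDist_closure]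
      exact ((Metric.infDist_lt_iff hA)).symm
    have hkn := kneser_dilation d (closure A) isClosed_closure hA.closure (r := r) hlC
    rw [hset, Measure.addHaar_smul, finrank_euclideanSpace_fin, abs_pow, abs_of_pos hcpos, hthick, hthick]
    calc ENNReal.ofReal (c ^ d) * volume {x : EuclideanSpace ℝ (Fin d) |
          infDist x (closure A) < c⁻¹ * r}
        ≤ ENNReal.ofReal (c ^ d) * (ENNReal.ofReal (c⁻¹ ^ d)
            * volume {x : EuclideanSpace ℝ (Fin d) | infDist x (closure A) < r}) :=
          mul_le_mul_right hkn _
      _ = volume {x : EuclideanSpace ℝ (Fin d) | infDist x (closure A) < r} := by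
          rw [← mul_assoc, ← ENNReal.ofReal_mul (by positivity), ← mul_pow,
            mul_inv_cancel₀ hcpos.ne', one_pow, ENNReal.ofReal_one, one_mul]
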